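/- Suppose the graph is connected and Assumption (β) holds, and let Ω ⊆ V be finite, nonempty and Ω ≠ V. Then every eigenvalue λ of the Dirichlet normalized Laplacian Δ̃^D_Ω satisfies Re λ > 0, and there exists an eigenvalue λ of Δ̃^D_Ω with Re λ ≤ 1. -/

import Mathlib

open Function Complex

noncomputable def betaPlus {V : Type*} (b : V → V → ℝ) (x : V) : ℝ := ∑ᶠ y, b x y
noncomputable def betaMinus {V : Type*} (b : V → V → ℝ) (x : V) : ℝ := ∑ᶠ y, b y x

/-- The graph is connected: any two vertices are joined by a chain of edges (in either
direction). -/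
def GraphConnected {V : Type*} (b : V → V → ℝ) : Prop :=
  ∀ x y : V, ∃ (k : ℕ) (c : ℕ → V), c 0 = x ∧ c k = y ∧
    ∀ i < k, 0 < b (c i) (c (i + 1)) + b (c (i + 1)) (c i)

/-- Extension by zero of a function on `Ω` to all of `V`. -/
noncomputable def extendZero {V : Type*} [DecidableEq V] (Ω : Finset V) (f : ↥Ω → ℂ) :
    V → ℂ :=
  fun x => if h : x ∈ Ω then f ⟨x, h⟩ else 0

/-- The Dirichlet normalized Laplacian on a finite set `Ω`:
`(Δ̃^D_Ω f)(x) = (1/β⁺(x)) Σ_y b(x,y)(f̃(x) − f̃(y))` where `f̃` extends `f` by zero. -/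
noncomputable def dirichletLap {V : Type*} [DecidableEq V] (b : V → V → ℝ) (w : V → ℝ)
    (Ω : Finset V) (f : ↥Ω → ℂ) (x : ↥Ω) : ℂ :=
  (1 / (w (x : V) : ℂ)) *
    ∑ᶠ y : V, (b (x : V) y : ℂ) * (extendZero Ω f (x : V) - extendZero Ω f y)

/-- The weighted inner product on functions on the finite set `Ω`. -/
noncomputable def innerF {V : Type*} (w : V → ℝ) (Ω : Finset V) (f g : ↥Ω → ℂ) : ℂ :=
  ∑ x : ↥Ω, (w (x : V) : ℂ) * f x * (starRingEnd ℂ) (g x)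

section Aux

variable {V : Type*} [DecidableEq V] {b : V → V → ℝ}

omit [DecidableEq V] in
lemma betaPlus_eq_sum (hloc : ∀ x, {y | b x y ≠ 0 ∨ b y x ≠ 0}.Finite)
    (x : V) {T : Finset V} (hT : (hloc x).toFinset ⊆ T) :
    betaPlus b x = ∑ y ∈ T, b x y := by
  rw [betaPlus]
  apply finsum_eq_sum_of_support_subset
  intro y hy
  exact hT ((hloc x).mem_toFinset.2 (Or.inl hy))

omit [DecidableEq V] in
lemma betaMinus_eq_sum (hloc : ∀ x, {y | b x y ≠ 0 ∨ b y x ≠ 0}.Finite)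
    (y : V) {T : Finset V} (hT : (hloc y).toFinset ⊆ T) :
    betaMinus b y = ∑ x ∈ T, b x y := by
  rw [betaMinus]
  apply finsum_eq_sum_of_support_subset
  intro x hx
  exact hT ((hloc y).mem_toFinset.2 (Or.inr hx))

omit [DecidableEq V] in
lemma finsum_b_eq_sum (hloc : ∀ x, {y | b x y ≠ 0 ∨ b y x ≠ 0}.Finite)
    (x : V) (h : V → ℂ) {T : Finset V} (hT : (hloc x).toFinset ⊆ T) :
    ∑ᶠ y, (b x y : ℂ) * h y = ∑ y ∈ T, (b x y : ℂ) * h y := by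
  apply finsum_eq_sum_of_support_subset
  intro y hy
  refine hT ((hloc x).mem_toFinset.2 (Or.inl ?_))
  intro h0
  apply hy
  simp [h0]

lemma dirichletLap_eq (hloc : ∀ x, {y | b x y ≠ 0 ∨ b y x ≠ 0}.Finite)
    (hβp_pos : ∀ x, 0 < betaPlus b x)
    (Ω : Finset V) (f : ↥Ω → ℂ) (x : ↥Ω) :
    dirichletLap b (betaPlus b) Ω f x
      = f x - (1 / (betaPlus b (x : V) : ℂ)) * ∑ y : ↥Ω, (b (x : V) (y : V) : ℂ) * f y := by
  classical
  set T : Finset V := (hloc (x:V)).toFinset ∪ Ω with hTdef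
  have hT : (hloc (x:V)).toFinset ⊆ T := Finset.subset_union_left
  have hΩT : Ω ⊆ T := Finset.subset_union_right
  rw [dirichletLap, finsum_b_eq_sum hloc _ _ hT]
  have hgx : extendZero Ω f (x:V) = f x := by
    simp [extendZero]
  have hsplit : ∑ y ∈ T, (b (x:V) y : ℂ) * (extendZero Ω f (x:V) - extendZero Ω f y)
      = (∑ y ∈ T, (b (x:V) y : ℂ)) * f x - ∑ y ∈ T, (b (x:V) y : ℂ) * extendZero Ω f y := by
    rw [Finset.sum_mul, ← Finset.sum_sub_distrib]
    exact Finset.sum_congr rfl fun y _ => by rw [hgx]; ring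
  have hbsum : (∑ y ∈ T, (b (x:V) y : ℂ)) = ((betaPlus b (x:V) : ℝ) : ℂ) := by
    rw [betaPlus_eq_sum hloc _ hT]
    push_cast
    rfl
  have hsum2 : ∑ y ∈ T, (b (x:V) y : ℂ) * extendZero Ω f y
      = ∑ y : ↥Ω, (b (x:V) (y:V) : ℂ) * f y := by
    rw [← Finset.sum_subset hΩT (fun y _ hy => by simp [extendZero, hy])]
    rw [← Finset.sum_coe_sort Ω (fun y => (b (x:V) y : ℂ) * extendZero Ω f y)]
    exact Finset.sum_congr rfl fun y _ => by simp [extendZero]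
  rw [hsplit, hbsum, hsum2]
  have hb0 : ((betaPlus b (x:V) : ℝ) : ℂ) ≠ 0 := by
    exact_mod_cast (hβp_pos (x:V)).ne'
  field_simp

omit [DecidableEq V] in
lemma re_term_eq (r : ℝ) (u v : ℂ) :
    2 * (((r:ℂ) * ((u - v) * (starRingEnd ℂ) u)).re)
      = r * Complex.normSq (u - v) + r * (Complex.normSq u - Complex.normSq v) := by
  simp only [Complex.normSq_apply, Complex.mul_re, Complex.mul_im, Complex.sub_re,
    Complex.sub_im, Complex.conj_re, Complex.conj_im, Complex.ofReal_re, Complex.ofReal_im]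
  ring

end Aux

/-- Suppose the graph is connected and Assumption (β) holds, and let
`Ω ⊆ V` be finite, nonempty and `Ω ≠ V`. Then every eigenvalue `λ` of the Dirichlet
normalized Laplacian `Δ̃^D_Ω` satisfies `Re λ > 0`, and there exists an eigenvalue `λ`
of `Δ̃^D_Ω` with `Re λ ≤ 1`. -/
theorem dirichlet_eigenvalue_re_pos_and_exists_le_one
    (V : Type*) [Countable V] [DecidableEq V] (b : V → V → ℝ)
    (hb_nonneg : ∀ x y, 0 ≤ b x y)
    (hb_loop : ∀ x, b x x = 0)
    (hloc_fin : ∀ x, {y | b x y ≠ 0 ∨ b y x ≠ 0}.Finite)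
    (hβp_pos : ∀ x, 0 < betaPlus b x)
    (hβm_pos : ∀ x, 0 < betaMinus b x)
    (hβ : ∀ x, betaPlus b x = betaMinus b x)
    (hconn : GraphConnected b)
    (Ω : Finset V) (hΩ : Ω.Nonempty) (hΩne : ∃ v : V, v ∉ Ω) :
    (∀ (lam : ℂ) (f : ↥Ω → ℂ), f ≠ 0 →
        (∀ x : ↥Ω, dirichletLap b (betaPlus b) Ω f x = lam * f x) → 0 < lam.re) ∧
    (∃ (lam : ℂ) (f : ↥Ω → ℂ), f ≠ 0 ∧
        (∀ x : ↥Ω, dirichletLap b (betaPlus b) Ω f x = lam * f x) ∧ lam.re ≤ 1) := by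
  classical
  have hb0 : ∀ x : V, ((betaPlus b x : ℝ) : ℂ) ≠ 0 := fun x => by
    exact_mod_cast (hβp_pos x).ne'
  set S : Finset V := Ω ∪ Ω.biUnion (fun x => (hloc_fin x).toFinset) with hSdef
  have hΩS : Ω ⊆ S := Finset.subset_union_left
  have hNS : ∀ x ∈ Ω, (hloc_fin x).toFinset ⊆ S := by
    intro x hx
    rw [hSdef]
    exact (Finset.subset_biUnion_of_mem (fun z => (hloc_fin z).toFinset) hx).trans
      Finset.subset_union_right
  constructor
  · -- Part 1: every eigenvalue has positive real part
    rintro lam f hf hef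
    set g : V → ℂ := extendZero Ω f with hg
    have hgΩ : ∀ x : ↥Ω, g (x:V) = f x := fun x => by simp [hg, extendZero]
    have hg0 : ∀ v, v ∉ Ω → g v = 0 := fun v hv => by simp [hg, extendZero, hv]
    obtain ⟨x0, hx0⟩ : ∃ x0 : ↥Ω, f x0 ≠ 0 := by
      by_contra h; push_neg at h; exact hf (funext h)
    -- the eigen-equation rows, summed over S
    have hrow : ∀ x ∈ Ω, ∑ y ∈ S, (b x y : ℂ) * (g x - g y)
        = ((betaPlus b x : ℝ) : ℂ) * (lam * g x) := by
      intro x hx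
      have h1 := hef ⟨x, hx⟩
      rw [dirichletLap, ← hg] at h1
      rw [finsum_b_eq_sum hloc_fin x (fun y => g x - g y) (hNS x hx),
        one_div, inv_mul_eq_iff_eq_mul₀ (hb0 x)] at h1
      rw [h1, hgΩ ⟨x, hx⟩]
    -- the complex quadratic form
    have hOS : ∑ x ∈ S, (∑ y ∈ S, (b x y : ℂ) * (g x - g y)) * (starRingEnd ℂ) (g x)
        = ∑ x ∈ Ω, (∑ y ∈ S, (b x y : ℂ) * (g x - g y)) * (starRingEnd ℂ) (g x) :=
      (Finset.sum_subset hΩS (fun x _ hx => by rw [hg0 x hx]; simp)).symm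
    have hD2 : ∑ x ∈ S, (∑ y ∈ S, (b x y : ℂ) * (g x - g y)) * (starRingEnd ℂ) (g x)
        = lam * ((∑ x ∈ Ω, betaPlus b x * Complex.normSq (g x) : ℝ) : ℂ) := by
      rw [hOS]
      push_cast
      rw [Finset.mul_sum]
      apply Finset.sum_congr rfl
      intro x hx
      rw [hrow x hx, ← Complex.mul_conj (g x)]
      ring
    set Nval : ℝ := ∑ x ∈ Ω, betaPlus b x * Complex.normSq (g x) with hNval
    have hNpos : 0 < Nval := by
      apply Finset.sum_pos'
      · intro x _
        exact mul_nonneg (hβp_pos x).le (Complex.normSq_nonneg _)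
      · refine ⟨(x0 : V), x0.2, ?_⟩
        apply mul_pos (hβp_pos _)
        rw [Complex.normSq_pos, hgΩ x0]
        exact hx0
    have hre : (∑ x ∈ S, (∑ y ∈ S, (b x y : ℂ) * (g x - g y)) * (starRingEnd ℂ) (g x)).re
        = lam.re * Nval := by
      rw [hD2]
      simp [Complex.mul_re]
    -- real-part decomposition
    have hprod : ∑ x ∈ S, (∑ y ∈ S, (b x y : ℂ) * (g x - g y)) * (starRingEnd ℂ) (g x)
        = ∑ x ∈ S, ∑ y ∈ S, (b x y : ℂ) * ((g x - g y) * (starRingEnd ℂ) (g x)) := by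
      apply Finset.sum_congr rfl
      intro x _
      rw [Finset.sum_mul]
      exact Finset.sum_congr rfl fun y _ => by ring
    have h2re : 2 * (∑ x ∈ S, (∑ y ∈ S, (b x y : ℂ) * (g x - g y)) * (starRingEnd ℂ) (g x)).re
        = (∑ x ∈ S, ∑ y ∈ S, b x y * Complex.normSq (g x - g y))
          + ∑ x ∈ S, ∑ y ∈ S, b x y * (Complex.normSq (g x) - Complex.normSq (g y)) := by
      rw [hprod, Complex.re_sum, Finset.mul_sum, ← Finset.sum_add_distrib]
      apply Finset.sum_congr rfl
      intro x _
      rw [Complex.re_sum, Finset.mul_sum, ← Finset.sum_add_distrib]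
      exact Finset.sum_congr rfl fun y _ => re_term_eq _ _ _
    -- the "degree" term vanishes by Assumption (β)
    have hDzero : ∑ x ∈ S, ∑ y ∈ S, b x y * (Complex.normSq (g x) - Complex.normSq (g y))
        = 0 := by
      have hsplit : ∑ x ∈ S, ∑ y ∈ S, b x y * (Complex.normSq (g x) - Complex.normSq (g y))
          = (∑ x ∈ S, ∑ y ∈ S, b x y * Complex.normSq (g x))
            - ∑ x ∈ S, ∑ y ∈ S, b x y * Complex.normSq (g y) := by
        rw [← Finset.sum_sub_distrib]
        apply Finset.sum_congr rfl
        intro x _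
        rw [← Finset.sum_sub_distrib]
        exact Finset.sum_congr rfl fun y _ => by ring
      have h1 : ∑ x ∈ S, ∑ y ∈ S, b x y * Complex.normSq (g x)
          = ∑ x ∈ Ω, betaPlus b x * Complex.normSq (g x) := by
        rw [← Finset.sum_subset hΩS (fun x _ hx => Finset.sum_eq_zero fun y _ => by
          rw [hg0 x hx]; simp)]
        apply Finset.sum_congr rfl
        intro x hx
        rw [← Finset.sum_mul, ← betaPlus_eq_sum hloc_fin x (hNS x hx)]
      have h2 : ∑ x ∈ S, ∑ y ∈ S, b x y * Complex.normSq (g y)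
          = ∑ y ∈ Ω, betaMinus b y * Complex.normSq (g y) := by
        rw [Finset.sum_comm]
        rw [← Finset.sum_subset hΩS (fun y _ hy => Finset.sum_eq_zero fun x _ => by
          rw [hg0 y hy]; simp)]
        apply Finset.sum_congr rfl
        intro y hy
        rw [← Finset.sum_mul, ← betaMinus_eq_sum hloc_fin y (hNS y hy)]
      rw [hsplit, h1, h2]
      rw [Finset.sum_congr rfl (fun x _ => by rw [hβ x])]
      ring
    -- energy is nonnegative, and positive by connectivity
    have hEnn : ∀ x ∈ S, ∀ y ∈ S, (0:ℝ) ≤ b x y * Complex.normSq (g x - g y) := fun x _ y _ =>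
      mul_nonneg (hb_nonneg _ _) (Complex.normSq_nonneg _)
    have hEnonneg : 0 ≤ ∑ x ∈ S, ∑ y ∈ S, b x y * Complex.normSq (g x - g y) :=
      Finset.sum_nonneg fun x hx => Finset.sum_nonneg fun y hy => hEnn x hx y hy
    have hEne : ∑ x ∈ S, ∑ y ∈ S, b x y * Complex.normSq (g x - g y) ≠ 0 := by
      intro hEzero
      have hterm : ∀ x ∈ S, ∀ y ∈ S, b x y * Complex.normSq (g x - g y) = 0 := by
        intro x hx y hy
        have houter := (Finset.sum_eq_zero_iff_of_nonneg
          (fun x hx => Finset.sum_nonneg fun y hy => hEnn x hx y hy)).mp hEzero x hx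
        exact (Finset.sum_eq_zero_iff_of_nonneg (fun y hy => hEnn x hx y hy)).mp houter y hy
      have hedge : ∀ z w, g z ≠ 0 → 0 < b z w + b w z → g w = g z := by
        intro z w hz hzw
        have hzΩ : z ∈ Ω := by
          by_contra h; exact hz (hg0 z h)
        have hzS : z ∈ S := hΩS hzΩ
        have hne : b z w ≠ 0 ∨ b w z ≠ 0 := by
          by_contra h
          push_neg at h
          rw [h.1, h.2] at hzw
          simp at hzw
        have hwS : w ∈ S := hNS z hzΩ ((hloc_fin z).mem_toFinset.2 hne)
        rcases hne with h | h
        · have ht := hterm z hzS w hwS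
          rcases mul_eq_zero.mp ht with h' | h'
          · exact absurd h' h
          · exact (sub_eq_zero.mp (Complex.normSq_eq_zero.mp h')).symm
        · have ht := hterm w hwS z hzS
          rcases mul_eq_zero.mp ht with h' | h'
          · exact absurd h' h
          · exact sub_eq_zero.mp (Complex.normSq_eq_zero.mp h')
      obtain ⟨v, hv⟩ := hΩne
      obtain ⟨k, c, hc0, hck, hstep⟩ := hconn (x0 : V) v
      have hchain : ∀ i, i ≤ k → g (c i) = g (x0 : V) := by
        intro i
        induction i with
        | zero => intro _; rw [hc0]
        | succ i ih =>
          intro hik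
          have hi : g (c i) = g (x0 : V) := ih (Nat.le_of_succ_le hik)
          have hgne : g (c i) ≠ 0 := by
            rw [hi, hgΩ x0]; exact hx0
          rw [← hi]
          exact hedge (c i) (c (i+1)) hgne (hstep i (Nat.lt_of_succ_le hik))
      have hvk : g v = g (x0 : V) := by
        rw [← hck]; exact hchain k le_rfl
      rw [hg0 v hv, hgΩ x0] at hvk
      exact hx0 hvk.symm
    have hEpos : 0 < ∑ x ∈ S, ∑ y ∈ S, b x y * Complex.normSq (g x - g y) :=
      hEnonneg.lt_of_ne (Ne.symm hEne)
    -- combine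
    have hkey : 2 * (lam.re * Nval) = ∑ x ∈ S, ∑ y ∈ S, b x y * Complex.normSq (g x - g y) := by
      rw [← hre, h2re, hDzero, add_zero]
    have hprodpos : 0 < lam.re * Nval := by linarith
    rcases mul_pos_iff.mp hprodpos with ⟨h1, _⟩ | ⟨_, h2⟩
    · exact h1
    · linarith
  · -- Part 2: existence of an eigenvalue with real part at most 1
    haveI : Nonempty ↥Ω := Finset.nonempty_coe_sort.mpr hΩ
    set M : Matrix ↥Ω ↥Ω ℂ := fun x y =>
      (if x = y then 1 else 0) - ((b (x:V) (y:V) / betaPlus b (x:V) : ℝ) : ℂ) with hM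
    have htr : M.trace = (Fintype.card ↥Ω : ℂ) := by
      rw [Matrix.trace]
      have hdiag : ∀ x : ↥Ω, M.diag x = 1 := fun x => by
        simp [hM, Matrix.diag, hb_loop]
      rw [Finset.sum_congr rfl fun x _ => hdiag x]
      simp
    have hsum_roots : M.charpoly.roots.sum = (Fintype.card ↥Ω : ℂ) := by
      rw [← Matrix.trace_eq_sum_roots_charpoly, htr]
    have hcard : Multiset.card M.charpoly.roots = Fintype.card ↥Ω := by
      rw [Polynomial.splits_iff_card_roots.mp (IsAlgClosed.splits M.charpoly),
        Matrix.charpoly_natDegree_eq_dim]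
    have hex : ∃ r ∈ M.charpoly.roots, r.re ≤ 1 := by
      by_contra h
      push_neg at h
      have hne : M.charpoly.roots ≠ 0 := by
        intro h0
        rw [h0] at hcard
        simp only [Multiset.card_zero] at hcard
        exact (Fintype.card_pos (α := ↥Ω)).ne hcard
      have hlt := Multiset.sum_lt_sum_of_nonempty hne
        (f := fun _ => (1:ℝ)) (g := Complex.re) (fun i hi => h i hi)
      have hL : (M.charpoly.roots.map (fun _ => (1:ℝ))).sum
          = (Multiset.card M.charpoly.roots : ℝ) := by
        simp [Multiset.map_const']
      have hR : (M.charpoly.roots.map Complex.re).sum = (Fintype.card ↥Ω : ℝ) := by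
        have hmap := (map_multiset_sum Complex.reAddGroupHom M.charpoly.roots).symm
        rw [show ⇑Complex.reAddGroupHom = Complex.re from rfl] at hmap
        rw [hmap, hsum_roots]
        simp
      rw [hL, hR, hcard] at hlt
      exact lt_irrefl _ hlt
    obtain ⟨r, hrmem, hrle⟩ := hex
    have hroot : M.charpoly.IsRoot r :=
      Polynomial.isRoot_of_mem_roots hrmem
    have hdet : ((Matrix.scalar ↥Ω) r - M).det = 0 := by
      have h1 : Polynomial.eval r M.charpoly = 0 := hroot
      rwa [Matrix.charpoly, _root_.eval_det, Matrix.matPolyEquiv_charmatrix,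
        Polynomial.eval_sub, Polynomial.eval_X, Polynomial.eval_C] at h1
    obtain ⟨v, hv0, hveq⟩ := Matrix.exists_mulVec_eq_zero_iff.mpr hdet
    have hMv : M.mulVec v = r • v := by
      have h1 : (Matrix.scalar ↥Ω r).mulVec v - M.mulVec v = 0 := by
        rw [← Matrix.sub_mulVec]; exact hveq
      have h2 : (Matrix.scalar ↥Ω r).mulVec v = r • v := by
        funext x
        rw [Matrix.scalar_apply, Matrix.mulVec_diagonal]
        simp
      rw [h2] at h1
      funext x
      have := congrFun h1 x
      simp only [Pi.sub_apply, Pi.zero_apply, sub_eq_zero] at this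
      exact this.symm
    refine ⟨r, v, hv0, ?_, hrle⟩
    intro x
    rw [dirichletLap_eq hloc_fin hβp_pos Ω v x]
    have hmv := congrFun hMv x
    rw [Matrix.mulVec, dotProduct] at hmv
    have hexp : ∑ y : ↥Ω, M x y * v y
        = v x - (1 / ((betaPlus b (x:V) : ℝ) : ℂ)) * ∑ y : ↥Ω, (b (x:V) (y:V) : ℂ) * v y := by
      rw [hM]
      simp only [sub_mul]
      rw [Finset.sum_sub_distrib]
      congr 1
      · simp [Finset.sum_ite_eq, ite_mul]
      · rw [Finset.mul_sum]
        apply Finset.sum_congr rfl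
        intro y _
        rw [Complex.ofReal_div]
        field_simp
    rw [hexp] at hmv
    rw [hmv]
    simp [Pi.smul_apply, smul_eq_mul]
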